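/- Let S be an Enriques surface and L an effective divisor on S with L^2 > 0. Then the phi-invariant of L is at most the length of L, i.e. φ(L) ≤ l(L). -/

import Mathlib

private lemma exists_list_sum {M : Type*} [AddCommGroup M] {ι : Type*} [DecidableEq ι]
    (s : Finset ι) (f : ι → M) (c : ι → ℤ) (hc : ∀ i ∈ s, 0 ≤ c i) :
    ∃ ls : List M, (∀ y ∈ ls, ∃ i ∈ s, y = f i) ∧ ls.sum = ∑ i ∈ s, c i • f i ∧
      (ls.length : ℤ) = ∑ i ∈ s, c i := by
  induction s using Finset.induction with
  | empty => exact ⟨[], by simp, by simp, by simp⟩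
  | @insert j s hj ih =>
    obtain ⟨ls, h1, h2, h3⟩ := ih (fun i hi => hc i (Finset.mem_insert_of_mem hi))
    refine ⟨List.replicate (c j).toNat (f j) ++ ls, ?_, ?_, ?_⟩
    · intro y hy
      rcases List.mem_append.1 hy with hy | hy
      · exact ⟨j, Finset.mem_insert_self j s, (List.eq_of_mem_replicate hy)⟩
      · obtain ⟨i, hi, hyi⟩ := h1 y hy
        exact ⟨i, Finset.mem_insert_of_mem hi, hyi⟩
    · have hcj : (c j).toNat • f j = c j • f j := by
        rw [← natCast_zsmul, Int.toNat_of_nonneg (hc j (Finset.mem_insert_self j s))]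
      rw [List.sum_append, List.sum_replicate, h2, Finset.sum_insert hj, hcj]
    · rw [List.length_append, List.length_replicate, Finset.sum_insert hj]
      push_cast
      rw [h3, Int.toNat_of_nonneg (hc j (Finset.mem_insert_self j s))]

private lemma exists_list_full {M : Type*} [AddCommGroup M] (E : Fin 10 → M) (E910 : M)
    (a : Fin 10 → ℤ) (a0 : ℤ) (ha : ∀ i, 0 ≤ a i) (ha0 : 0 ≤ a0) :
    ∃ ls : List M, (∀ y ∈ ls, y = E910 ∨ ∃ i, y = E i) ∧
      ls.sum = (∑ i, a i • E i) + a0 • E910 ∧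
      (ls.length : ℤ) = (∑ i, a i) + a0 := by
  obtain ⟨l1, h1, h2, h3⟩ := exists_list_sum Finset.univ E a (fun i _ => ha i)
  refine ⟨l1 ++ List.replicate a0.toNat E910, ?_, ?_, ?_⟩
  · intro y hy
    rcases List.mem_append.1 hy with hy | hy
    · obtain ⟨i, _, hyi⟩ := h1 y hy
      exact Or.inr ⟨i, hyi⟩
    · exact Or.inl (List.eq_of_mem_replicate hy)
  · have hc0 : a0.toNat • E910 = a0 • E910 := by
      rw [← natCast_zsmul, Int.toNat_of_nonneg ha0]
    rw [List.sum_append, List.sum_replicate, h2, hc0]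
  · rw [List.length_append, List.length_replicate]
    push_cast
    rw [h3, Int.toNat_of_nonneg ha0]

/-- On an Enriques surface (abstractly: its Picard/Num lattice with
intersection form `inter`, set of effective classes `Eff`), for an effective
divisor `L` with `L² > 0` one has `φ(L) ≤ l(L)`, where `φ(L)` is the minimum of
`E·L` over effective nontrivial isotropic `E`, and `l(L)` is the maximal number
of effective isotropic divisors summing to `L`. The fundamental presentation of
`L` (Prop. 2.3/5.5 of [kn-JMPA]) is given as a hypothesis. -/
theorem phi_le_length
    (Pic : Type*) [AddCommGroup Pic]
    (inter : Pic → Pic → ℤ)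
    (hsymm : ∀ x y, inter x y = inter y x)
    (haddl : ∀ x y z, inter (x + y) z = inter x z + inter y z)
    (hsmul : ∀ (k : ℤ) (x y : Pic), inter (k • x) y = k * inter x y)
    (Eff : Set Pic)
    (L : Pic) (hL : L ∈ Eff) (hL2 : 0 < inter L L)
    (phiL : ℤ)
    (hphi : IsLeast {n : ℤ | ∃ E, E ∈ Eff ∧ E ≠ 0 ∧ inter E E = 0 ∧ n = inter E L} phiL)
    (lenL : ℕ)
    (hlen : IsGreatest {l : ℕ | ∃ E : Fin l → Pic,
        (∀ i, E i ∈ Eff ∧ inter (E i) (E i) = 0) ∧ L = ∑ i, E i} lenL)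
    -- fundamental presentation of L:
    (E : Fin 10 → Pic) (E910 K : Pic) (a : Fin 10 → ℤ) (a0 ε : ℤ)
    (hEeff : ∀ i, E i ∈ Eff) (hEne : ∀ i, E i ≠ 0)
    (hEiso : ∀ i, inter (E i) (E i) = 0)
    (hEpair : ∀ i j, i ≠ j → inter (E i) (E j) = 1)
    (hE910eff : E910 ∈ Eff) (hE910ne : E910 ≠ 0) (hE910iso : inter E910 E910 = 0)
    (hE8E910 : inter (E 7) E910 = 1)
    (hEiE910 : ∀ i : Fin 10, (i : ℕ) ≤ 7 → inter (E i) E910 = 1)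
    (hKnum : ∀ x, inter K x = 0)
    (hKtwistE : ∀ i, E i + K ∈ Eff) (hKtwist910 : E910 + K ∈ Eff)
    (hanneg : ∀ i, 0 ≤ a i) (ha0 : 0 ≤ a0) (ha8 : a 7 = 0)
    (hε : ε = 0 ∨ ε = 1)
    (hpres : L = (∑ i, a i • E i) + a0 • E910 + ε • K) :
    phiL ≤ (lenL : ℤ) := by
  -- right additivity
  have haddr : ∀ x y z : Pic, inter x (y + z) = inter x y + inter x z := by
    intro x y z
    rw [hsymm, haddl, hsymm y, hsymm z]
  -- isotropy of K-twists
  have hisoK : ∀ x : Pic, inter x x = 0 → inter (x + K) (x + K) = 0 := by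
    intro x hx
    rw [haddl, haddr, haddr, hx, hKnum, hKnum, hsymm x K, hKnum]
    ring
  -- the linear functional `inter (E 7) ·`
  let f : Pic →+ ℤ := AddMonoidHom.mk' (fun y => inter (E 7) y) (fun y z => haddr _ y z)
  have hfL : ∀ x, f x = inter (E 7) x := fun _ => rfl
  have hK7 : inter (E 7) K = 0 := by rw [hsymm]; exact hKnum _
  -- key computation : inter (E 7) L = total number of summands
  have h7 : inter (E 7) L = (∑ i, a i) + a0 := by
    rw [hpres, ← hfL, map_add, map_add, map_sum]
    have h1 : ∀ i : Fin 10, f (a i • E i) = a i * inter (E 7) (E i) := by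
      intro i; rw [map_zsmul, smul_eq_mul, hfL]
    have h2 : f (a0 • E910) = a0 * inter (E 7) E910 := by
      rw [map_zsmul, smul_eq_mul, hfL]
    have h3 : f (ε • K) = ε * inter (E 7) K := by
      rw [map_zsmul, smul_eq_mul, hfL]
    rw [h2, h3, hK7, hE8E910, mul_zero, add_zero, mul_one]
    congr 1
    refine Finset.sum_congr rfl fun i _ => ?_
    rw [h1]
    by_cases h : i = 7
    · subst h; rw [ha8]; ring
    · rw [hEpair 7 i (Ne.symm h), mul_one]
  -- phiL ≤ inter (E 7) L
  have hphi7 : phiL ≤ (∑ i, a i) + a0 := by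
    rw [← h7]
    exact hphi.2 ⟨E 7, hEeff 7, hEne 7, hEiso 7, rfl⟩
  -- any good list gives a lower bound for lenL
  have hmem : ∀ ls : List Pic, (∀ y ∈ ls, y ∈ Eff ∧ inter y y = 0) → ls.sum = L →
      (ls.length : ℤ) ≤ (lenL : ℤ) := by
    intro ls hP hsum
    have : ls.length ∈ {l : ℕ | ∃ E : Fin l → Pic,
        (∀ i, E i ∈ Eff ∧ inter (E i) (E i) = 0) ∧ L = ∑ i, E i} := by
      refine ⟨fun i => ls[i.1], fun i => hP _ (List.getElem_mem _), ?_⟩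
      rw [← hsum, Fin.sum_univ_getElem]
    exact_mod_cast hlen.2 this
  rcases hε with hε | hε
  · -- no canonical twist
    obtain ⟨ls, h1, h2, h3⟩ := exists_list_full E E910 a a0 hanneg ha0
    have hsum : ls.sum = L := by rw [h2, hpres, hε, zero_smul, add_zero]
    have := hmem ls (fun y hy => by
      rcases h1 y hy with h | ⟨i, h⟩
      · subst h; exact ⟨hE910eff, hE910iso⟩
      · subst h; exact ⟨hEeff i, hEiso i⟩) hsum
    rw [h3] at this
    exact hphi7.trans this
  · -- canonical twist : total is positive
    subst hε
    have hNpos : 1 ≤ (∑ i, a i) + a0 := by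
      by_contra h
      push_neg at h
      have hs : 0 ≤ ∑ i, a i := Finset.sum_nonneg fun i _ => hanneg i
      have ha0' : a0 = 0 := by omega
      have hsz : ∑ i, a i = 0 := by omega
      have hai : ∀ i ∈ Finset.univ, a i = 0 :=
        (Finset.sum_eq_zero_iff_of_nonneg fun i _ => hanneg i).1 hsz
      have hLK : L = K := by
        rw [hpres, ha0', zero_smul, add_zero, one_smul,
          Finset.sum_eq_zero (fun i hi => by rw [hai i hi, zero_smul]), zero_add]
      rw [hLK, hKnum] at hL2
      exact absurd hL2 (lt_irrefl 0)
    by_cases h0 : 0 < a0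
    · -- absorb K into one copy of E910
      obtain ⟨ls, h1, h2, h3⟩ := exists_list_full E E910 a (a0 - 1) hanneg (by omega)
      set ls' : List Pic := (E910 + K) :: ls with hls'
      have hsum : ls'.sum = L := by
        rw [hls', List.sum_cons, h2, hpres, sub_zsmul, one_zsmul]
        abel
      have hgood : ∀ y ∈ ls', y ∈ Eff ∧ inter y y = 0 := by
        intro y hy
        rcases List.mem_cons.1 hy with h | hy
        · subst h; exact ⟨hKtwist910, hisoK _ hE910iso⟩
        · rcases h1 y hy with h | ⟨i, h⟩
          · subst h; exact ⟨hE910eff, hE910iso⟩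
          · subst h; exact ⟨hEeff i, hEiso i⟩
      have hlen' : (ls'.length : ℤ) = (∑ i, a i) + a0 := by
        rw [hls', List.length_cons]
        push_cast
        rw [h3]; ring
      have := hmem ls' hgood hsum
      rw [hlen'] at this
      exact hphi7.trans this
    · -- a0 = 0, absorb K into one copy of some E j
      have ha00 : a0 = 0 := le_antisymm (not_lt.1 h0) ha0
      have hex : ∃ j, 0 < a j := by
        by_contra h
        push_neg at h
        have : ∀ i ∈ Finset.univ, a i = 0 := fun i _ => le_antisymm (h i) (hanneg i)
        have := Finset.sum_eq_zero this
        omega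
      obtain ⟨j, hj⟩ := hex
      classical
      set a' : Fin 10 → ℤ := Function.update a j (a j - 1) with ha'
      have ha'nn : ∀ i, 0 ≤ a' i := by
        intro i
        by_cases h : i = j
        · subst h; rw [ha', Function.update_self]; omega
        · rw [ha', Function.update_of_ne h]; exact hanneg i
      obtain ⟨ls, h1, h2, h3⟩ := exists_list_full E E910 a' a0 ha'nn ha0
      have hptw : ∀ i, a' i • E i = a i • E i - (if i = j then E j else 0) := by
        intro i
        by_cases h : i = j
        · subst h; rw [ha', Function.update_self, if_pos rfl, sub_zsmul, one_zsmul, sub_eq_add_neg]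
        · rw [ha', Function.update_of_ne h, if_neg h, sub_zero]
      have hsum' : ∑ i, a' i • E i = (∑ i, a i • E i) - E j := by
        rw [Finset.sum_congr rfl fun i _ => hptw i, Finset.sum_sub_distrib]
        congr 1
        simp
      have hptw2 : ∀ i, a' i = a i - (if i = j then 1 else 0) := by
        intro i
        by_cases h : i = j
        · subst h; rw [ha', Function.update_self, if_pos rfl]
        · rw [ha', Function.update_of_ne h, if_neg h, sub_zero]
      have hsuma' : ∑ i, a' i = (∑ i, a i) - 1 := by
        rw [Finset.sum_congr rfl fun i _ => hptw2 i, Finset.sum_sub_distrib]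
        simp
      set ls' : List Pic := (E j + K) :: ls with hls'
      have hsum : ls'.sum = L := by
        rw [hls', List.sum_cons, h2, hsum', hpres, one_zsmul]
        abel
      have hgood : ∀ y ∈ ls', y ∈ Eff ∧ inter y y = 0 := by
        intro y hy
        rcases List.mem_cons.1 hy with h | hy
        · subst h; exact ⟨hKtwistE j, hisoK _ (hEiso j)⟩
        · rcases h1 y hy with h | ⟨i, h⟩
          · subst h; exact ⟨hE910eff, hE910iso⟩
          · subst h; exact ⟨hEeff i, hEiso i⟩
      have hlen' : (ls'.length : ℤ) = (∑ i, a i) + a0 := by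
        rw [hls', List.length_cons]
        push_cast
        rw [h3, hsuma']; ring
      have := hmem ls' hgood hsum
      rw [hlen'] at this
      exact hphi7.trans this
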